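/- The theta subgroup Γ_θ of SL₂(ℤ) is generated by the two elements S = (0 −1; 1 0) and T² = (1 2; 0 1). -/

import Mathlib

open Matrix Matrix.SpecialLinearGroup

/-- The theta subgroup `Γ_θ` of matrices congruent to the identity or to
`(0 1; 1 0)` modulo `2`. -/
def GammaTheta : Subgroup (Matrix.SpecialLinearGroup (Fin 2) ℤ) where
  carrier := { g |
    (((g.1 0 0 : ℤ) : ZMod 2) = 1 ∧ ((g.1 0 1 : ℤ) : ZMod 2) = 0 ∧
      ((g.1 1 0 : ℤ) : ZMod 2) = 0 ∧ ((g.1 1 1 : ℤ) : ZMod 2) = 1) ∨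
    (((g.1 0 0 : ℤ) : ZMod 2) = 0 ∧ ((g.1 0 1 : ℤ) : ZMod 2) = 1 ∧
      ((g.1 1 0 : ℤ) : ZMod 2) = 1 ∧ ((g.1 1 1 : ℤ) : ZMod 2) = 0) }
  one_mem' := by left; simp
  mul_mem' := by
    intro a b ha hb
    have h := Matrix.two_mul_expl a.1 b.1
    simp only [Set.mem_setOf_eq, Matrix.SpecialLinearGroup.coe_mul] at *
    rw [h.1, h.2.1, h.2.2.1, h.2.2.2]
    push_cast
    rcases ha with ⟨h1, h2, h3, h4⟩ | ⟨h1, h2, h3, h4⟩ <;>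
      rcases hb with ⟨g1, g2, g3, g4⟩ | ⟨g1, g2, g3, g4⟩ <;>
        simp [h1, h2, h3, h4, g1, g2, g3, g4]
  inv_mem' := by
    intro a ha
    simp only [Set.mem_setOf_eq] at *
    rw [SL2_inv_expl a]
    simp only [Matrix.cons_val_zero, Matrix.cons_val_one, Matrix.head_cons,
      Matrix.cons_val_fin_one, Matrix.head_fin_const]
    push_cast
    rcases ha with ⟨h1, h2, h3, h4⟩ | ⟨h1, h2, h3, h4⟩
    · left; simp [h1, h2, h3, h4]
    · right; simp [h1, h2, h3, h4] <;> decide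

lemma T2_coe : ((ModularGroup.T ^ 2 : Matrix.SpecialLinearGroup (Fin 2) ℤ) : Matrix (Fin 2) (Fin 2) ℤ) = !![1,2;0,1] := by
  norm_num [pow_two, ModularGroup.coe_T, Matrix.mul_fin_two]

lemma S_mem : ModularGroup.S ∈ GammaTheta := by
  right
  refine ⟨?_, ?_, ?_, ?_⟩ <;> simp [ModularGroup.coe_S] <;> decide

lemma T2_mem : ModularGroup.T ^ 2 ∈ GammaTheta := by
  left
  refine ⟨?_, ?_, ?_, ?_⟩ <;> simp [T2_coe] <;> decide

lemma reduce_step (a c : ℤ) (hc : c ≠ 0) (hpar : ¬ ((2:ℤ) ∣ (a - c))) :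
    ∃ n r : ℤ, a + 2 * n * c = r ∧ r.natAbs < c.natAbs := by
  obtain ⟨d, hd, hd0⟩ : ∃ d : ℤ, (d = c ∨ d = -c) ∧ 0 < d := by
    rcases lt_or_gt_of_ne hc with h | h
    exacts [⟨-c, Or.inr rfl, by omega⟩, ⟨c, Or.inl rfl, by omega⟩]
  set m : ℤ := 2 * d with hm
  have hm0 : 0 < m := by omega
  obtain ⟨r0, q, hq, h0, h1⟩ : ∃ r0 q, a = m * q + r0 ∧ 0 ≤ r0 ∧ r0 < m :=
    ⟨a % m, a / m, by rw [Int.emod_def]; ring, Int.emod_nonneg a hm0.ne', Int.emod_lt_of_pos a hm0⟩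
  have h2 : (2:ℤ) ∣ a - r0 := ⟨d * q, by rw [hq, hm]; ring⟩
  have hne : r0 ≠ d := by
    intro h; exact hpar (by rcases hd with hd | hd <;> omega)
  have hnat : c.natAbs = d.natAbs := by rcases hd with hd | hd <;> simp [hd]
  have main : ∃ n r : ℤ, a + 2 * n * d = r ∧ r.natAbs < d.natAbs := by
    rcases lt_or_ge r0 d with h | h
    · exact ⟨-q, r0, by linear_combination hq, by omega⟩
    · exact ⟨-q - 1, r0 - m, by linear_combination hq + hm, by omega⟩
  obtain ⟨n, r, h, hlt⟩ := main
  rcases hd with hd | hd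
  · exact ⟨n, r, by rw [← hd]; exact h, by rw [hnat]; exact hlt⟩
  · exact ⟨-n, r, by subst hd; linear_combination h, by rw [hnat]; exact hlt⟩

lemma key (n : ℕ) : ∀ g : Matrix.SpecialLinearGroup (Fin 2) ℤ, g ∈ GammaTheta →
    (g.1 1 0).natAbs = n → g ∈ Subgroup.closure {ModularGroup.S, ModularGroup.T ^ 2} := by
  induction n using Nat.strong_induction_on with
  | _ n ih =>
  intro g hg hn
  have hS_cl : ModularGroup.S ∈ Subgroup.closure {ModularGroup.S, ModularGroup.T ^ 2} :=
    Subgroup.subset_closure (by simp)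
  have hT2_cl : ModularGroup.T ^ 2 ∈ Subgroup.closure {ModularGroup.S, ModularGroup.T ^ 2} :=
    Subgroup.subset_closure (by simp)
  have hg' : (((g.1 0 0 : ℤ) : ZMod 2) = 1 ∧ ((g.1 0 1 : ℤ) : ZMod 2) = 0 ∧
      ((g.1 1 0 : ℤ) : ZMod 2) = 0 ∧ ((g.1 1 1 : ℤ) : ZMod 2) = 1) ∨
    (((g.1 0 0 : ℤ) : ZMod 2) = 0 ∧ ((g.1 0 1 : ℤ) : ZMod 2) = 1 ∧
      ((g.1 1 0 : ℤ) : ZMod 2) = 1 ∧ ((g.1 1 1 : ℤ) : ZMod 2) = 0) := hg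
  by_cases hc : g.1 1 0 = 0
  · -- c = 0 case
    have hdet : g.1 0 0 * g.1 1 1 - g.1 0 1 * g.1 1 0 = 1 := by
      have := g.2; rwa [Matrix.det_fin_two] at this
    rw [hc, mul_zero, sub_zero] at hdet
    have hb2 : (2:ℤ) ∣ g.1 0 1 := by
      rcases hg' with ⟨_, h2, _, _⟩ | ⟨_, _, h3, _⟩
      · exact (ZMod.intCast_zmod_eq_zero_iff_dvd _ 2).mp h2
      · exfalso; rw [hc] at h3; simp at h3
    obtain ⟨mm, hb⟩ := hb2
    rcases Int.eq_one_or_neg_one_of_mul_eq_one' hdet with ⟨ha, hd⟩ | ⟨ha, hd⟩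
    · have hgeq : g = ModularGroup.T ^ (2 * mm : ℤ) := by
        ext i j
        fin_cases i <;> fin_cases j <;>
          simp [ModularGroup.coe_T_zpow, ha, hb, hc, hd]
      rw [hgeq, show (ModularGroup.T ^ (2 * mm : ℤ)) = (ModularGroup.T ^ 2) ^ mm by
        rw [← zpow_natCast ModularGroup.T 2, ← _root_.zpow_mul]; norm_num]
      exact Subgroup.zpow_mem _ hT2_cl mm
    · have hgeq : g = ModularGroup.S * ModularGroup.S * ModularGroup.T ^ (-(2 * mm) : ℤ) := by
        ext i j
        fin_cases i <;> fin_cases j <;>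
          simp [ModularGroup.coe_T_zpow, ModularGroup.coe_S, Matrix.mul_apply,
            Fin.sum_univ_two, ha, hb, hc, hd]
      rw [hgeq, show (ModularGroup.T ^ (-(2 * mm) : ℤ)) = ((ModularGroup.T ^ 2) ^ (-mm : ℤ)) by
        rw [← zpow_natCast ModularGroup.T 2, ← _root_.zpow_mul]; norm_num]
      exact Subgroup.mul_mem _ (Subgroup.mul_mem _ hS_cl hS_cl)
        (Subgroup.zpow_mem _ hT2_cl (-mm))
  · -- c ≠ 0 case
    have hpar : ¬ ((2:ℤ) ∣ (g.1 0 0 - g.1 1 0)) := by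
      intro hdvd
      have h0 : ((g.1 0 0 - g.1 1 0 : ℤ) : ZMod 2) = 0 :=
        (ZMod.intCast_zmod_eq_zero_iff_dvd _ 2).mpr hdvd
      push_cast at h0
      rcases hg' with ⟨h1, _, h3, _⟩ | ⟨h1, _, h3, _⟩ <;> rw [h1, h3] at h0 <;> simp at h0
    obtain ⟨k, r, hnr, hlt⟩ := reduce_step (g.1 0 0) (g.1 1 0) hc hpar
    set u : Matrix.SpecialLinearGroup (Fin 2) ℤ := (ModularGroup.T ^ 2) ^ k with hu
    have huc : (u : Matrix (Fin 2) (Fin 2) ℤ) = !![1, 2 * k; 0, 1] := by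
      rw [hu, show ((ModularGroup.T ^ 2) ^ k) = ModularGroup.T ^ (2 * k : ℤ) by
        rw [← zpow_natCast ModularGroup.T 2, ← _root_.zpow_mul]; norm_num]
      exact ModularGroup.coe_T_zpow _
    set g' : Matrix.SpecialLinearGroup (Fin 2) ℤ := ModularGroup.S * (u * g) with hg'def
    have hcg' : g'.1 1 0 = r := by
      rw [hg'def]
      simp [ModularGroup.coe_S, huc, Matrix.mul_apply, Fin.sum_univ_two, Matrix.vecMul, dotProduct]
      linear_combination hnr
    have hg'mem : g' ∈ GammaTheta := by
      exact Subgroup.mul_mem _ S_mem (Subgroup.mul_mem _ (Subgroup.zpow_mem _ T2_mem k) hg)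
    have hg'cl : g' ∈ Subgroup.closure {ModularGroup.S, ModularGroup.T ^ 2} := by
      refine ih r.natAbs ?_ g' hg'mem (by rw [hcg'])
      rw [← hn]; exact hlt
    have hgeq : g = u⁻¹ * (ModularGroup.S⁻¹ * g') := by rw [hg'def]; group
    rw [hgeq]
    exact Subgroup.mul_mem _ (Subgroup.inv_mem _ (Subgroup.zpow_mem _ hT2_cl k))
      (Subgroup.mul_mem _ (Subgroup.inv_mem _ hS_cl) hg'cl)


/-- `Γ_θ` is generated by `S = (0 -1; 1 0)` and `T² = (1 2; 0 1)`. -/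
theorem stmt19 :
    Subgroup.closure {ModularGroup.S, ModularGroup.T ^ 2} = GammaTheta := by
  apply le_antisymm
  · rw [Subgroup.closure_le]
    rintro x hx
    simp only [Set.mem_insert_iff, Set.mem_singleton_iff] at hx
    rcases hx with rfl | rfl
    · exact S_mem
    · exact T2_mem
  · intro g hg
    exact key (g.1 1 0).natAbs g hg rfl
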